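/- Let T : H → H be a bounded operator on a complex Hilbert space with conjugation C, and suppose T is self-transpose, i.e., C T* C = T. Then if T is Fredholm, Index(T) = 0. -/

import Mathlib

open Module

section Aux

variable {H : Type*} [NormedAddCommGroup H] [InnerProductSpace ℂ H] [CompleteSpace H]

/-- A bounded operator with finite-dimensional cokernel has closed range. -/
lemma aux_isClosed_range (T : H →L[ℂ] H)
    (hfd : FiniteDimensional ℂ (H ⧸ LinearMap.range (T : H →ₗ[ℂ] H))) :
    IsClosed ((LinearMap.range (T : H →ₗ[ℂ] H) : Submodule ℂ H) : Set H) := by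
  classical
  set R : Submodule ℂ H := LinearMap.range (T : H →ₗ[ℂ] H) with hRdef
  obtain ⟨F, hF⟩ := Submodule.exists_isCompl R
  haveI : FiniteDimensional ℂ (H ⧸ R) := hfd
  haveI : FiniteDimensional ℂ F := (R.quotientEquivOfIsCompl F hF).finiteDimensional
  haveI : CompleteSpace F := FiniteDimensional.complete ℂ F
  set K : Submodule ℂ H := LinearMap.ker (T : H →ₗ[ℂ] H) with hKdef
  haveI hKclosed : IsClosed (K : Set H) := ContinuousLinearMap.isClosed_ker T
  haveI : CompleteSpace (H ⧸ K) := Submodule.Quotient.completeSpace K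
  have hle : K ≤ LinearMap.ker (T : H →ₗ[ℂ] H) := le_refl _
  set Tbar : (H ⧸ K) →ₗ[ℂ] H := K.liftQ (T : H →ₗ[ℂ] H) hle with hTbar
  have hTbar_cont : Continuous Tbar := by
    rw [← (K.isOpenQuotientMap_mkQ).continuous_comp_iff]
    exact T.continuous
  set Tbar' : (H ⧸ K) →L[ℂ] H := ⟨Tbar, hTbar_cont⟩ with hTbar'
  have hcoe : (Tbar' : (H ⧸ K) →ₗ[ℂ] H) = Tbar := rfl
  have hrange : LinearMap.range (Tbar' : (H ⧸ K) →ₗ[ℂ] H) = R := by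
    have h1 : LinearMap.range (Tbar' : (H ⧸ K) →ₗ[ℂ] H) = LinearMap.range Tbar := rfl
    rw [h1, hTbar, Submodule.range_liftQ]
  have hker : LinearMap.ker (Tbar' : (H ⧸ K) →ₗ[ℂ] H) = ⊥ := by
    have h1 : LinearMap.ker (Tbar' : (H ⧸ K) →ₗ[ℂ] H) = LinearMap.ker Tbar := rfl
    rw [h1, hTbar]
    exact Submodule.ker_liftQ_eq_bot' K _ rfl
  have hclosed : IsClosed ((LinearMap.range (Tbar' : (H ⧸ K) →ₗ[ℂ] H) : Submodule ℂ H) : Set H) :=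
    Tbar'.closed_complemented_range_of_isCompl_of_ker_eq_bot F (hrange ▸ hF)
      F.closed_of_finiteDimensional hker
  rw [← hrange] at *
  exact hclosed

end Aux

/-- The Fredholm index: dim ker − dim coker. -/
noncomputable def fredholmIndex {H : Type*} [NormedAddCommGroup H] [InnerProductSpace ℂ H]
    (P : H →L[ℂ] H) : ℤ :=
  (finrank ℂ (LinearMap.ker (P : H →ₗ[ℂ] H)) : ℤ) - (finrank ℂ (H ⧸ LinearMap.range (P : H →ₗ[ℂ] H)) : ℤ)

/-- A bounded operator is Fredholm if its kernel and cokernel are finite dimensional. -/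
def IsFredholm {H : Type*} [NormedAddCommGroup H] [InnerProductSpace ℂ H]
    (P : H →L[ℂ] H) : Prop :=
  FiniteDimensional ℂ (LinearMap.ker (P : H →ₗ[ℂ] H)) ∧ FiniteDimensional ℂ (H ⧸ LinearMap.range (P : H →ₗ[ℂ] H))

/-- If `T` is self-transpose, `C T* C = T`, and Fredholm, then `Index T = 0`. -/
theorem selfTranspose_index_zero {H : Type*} [NormedAddCommGroup H]
    [InnerProductSpace ℂ H] [CompleteSpace H]
    (C : H → H)
    (hC_add : ∀ x y, C (x + y) = C x + C y)
    (hC_smul : ∀ (a : ℂ) (x : H), C (a • x) = (starRingEnd ℂ) a • C x)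
    (hC_isom : ∀ x, ‖C x‖ = ‖x‖)
    (hC_invol : ∀ x, C (C x) = x)
    (T : H →L[ℂ] H)
    (hself : ∀ x, C (ContinuousLinearMap.adjoint T (C x)) = T x)
    (hT : IsFredholm T) :
    fredholmIndex T = 0 := by
  classical
  obtain ⟨hkerfd, hcokerfd⟩ := hT
  set T' := ContinuousLinearMap.adjoint T with hT'
  have hC0 : C 0 = 0 := by
    have h := hC_smul 0 0
    simpa using h
  have key : ∀ y, C (T' y) = T (C y) := by
    intro y
    have h := hself (C y)
    rwa [hC_invol] at h
  -- kernel correspondence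
  have memker1 : ∀ x : H, x ∈ LinearMap.ker (T' : H →ₗ[ℂ] H) → C x ∈ LinearMap.ker (T : H →ₗ[ℂ] H) := by
    intro x hx
    rw [LinearMap.mem_ker, ContinuousLinearMap.coe_coe] at hx ⊢
    rw [← key, hx, hC0]
  have memker2 : ∀ x : H, x ∈ LinearMap.ker (T : H →ₗ[ℂ] H) → C x ∈ LinearMap.ker (T' : H →ₗ[ℂ] H) := by
    intro x hx
    rw [LinearMap.mem_ker, ContinuousLinearMap.coe_coe] at hx ⊢
    have h := key (C x)
    rw [hC_invol, hx] at h
    have h2 := congrArg C h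
    rwa [hC_invol, hC0] at h2
  -- real-linearity of C
  have hCr : ∀ (a : ℝ) (x : H), C (a • x) = a • C x := by
    intro a x
    have h1 : a • x = (a : ℂ) • x := (algebraMap_smul ℂ a x).symm
    have h2 : a • C x = (a : ℂ) • C x := (algebraMap_smul ℂ a (C x)).symm
    rw [h1, h2, hC_smul, Complex.conj_ofReal]
  -- the real-linear equivalence between kernels
  let e : (LinearMap.ker (T' : H →ₗ[ℂ] H)) ≃ₗ[ℝ] (LinearMap.ker (T : H →ₗ[ℂ] H)) :=
  { toFun := fun x => ⟨C x, memker1 x x.2⟩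
    invFun := fun y => ⟨C y, memker2 y y.2⟩
    map_add' := fun x y => Subtype.ext (hC_add x y)
    map_smul' := fun a x => Subtype.ext (hCr a x)
    left_inv := fun x => Subtype.ext (hC_invol x)
    right_inv := fun y => Subtype.ext (hC_invol y) }
  haveI f1 : FiniteDimensional ℝ (LinearMap.ker (T : H →ₗ[ℂ] H)) := FiniteDimensional.complexToReal _
  haveI f2 : FiniteDimensional ℝ (LinearMap.ker (T' : H →ₗ[ℂ] H)) := e.symm.finiteDimensional
  haveI f3 : FiniteDimensional ℂ (LinearMap.ker (T' : H →ₗ[ℂ] H)) :=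
    Module.Finite.of_restrictScalars_finite ℝ ℂ _
  have hfr : finrank ℝ (LinearMap.ker (T' : H →ₗ[ℂ] H)) = finrank ℝ (LinearMap.ker (T : H →ₗ[ℂ] H)) := e.finrank_eq
  have hfc : finrank ℂ (LinearMap.ker (T' : H →ₗ[ℂ] H)) = finrank ℂ (LinearMap.ker (T : H →ₗ[ℂ] H)) := by
    have h1 := finrank_real_of_complex (LinearMap.ker (T' : H →ₗ[ℂ] H))
    have h2 := finrank_real_of_complex (LinearMap.ker (T : H →ₗ[ℂ] H))
    omega
  -- cokernel: range is closed, so the quotient is the orthogonal complement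
  have hRclosed : IsClosed ((LinearMap.range (T : H →ₗ[ℂ] H) : Submodule ℂ H) : Set H) :=
    aux_isClosed_range T hcokerfd
  haveI : CompleteSpace (LinearMap.range (T : H →ₗ[ℂ] H)) := hRclosed.completeSpace_coe
  have hcompl : IsCompl (LinearMap.range (T : H →ₗ[ℂ] H)) (LinearMap.range (T : H →ₗ[ℂ] H))ᗮ :=
    Submodule.isCompl_orthogonal_of_hasOrthogonalProjection
  have e2 : (H ⧸ LinearMap.range (T : H →ₗ[ℂ] H)) ≃ₗ[ℂ] (LinearMap.range (T : H →ₗ[ℂ] H))ᗮ :=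
    Submodule.quotientEquivOfIsCompl _ _ hcompl
  have horth : (LinearMap.range (T : H →ₗ[ℂ] H))ᗮ = LinearMap.ker (T' : H →ₗ[ℂ] H) := by
    ext x
    rw [Submodule.mem_orthogonal, LinearMap.mem_ker]
    constructor
    · intro h
      have h1 : inner ℂ (T (T' x)) x = (0 : ℂ) :=
        h (T (T' x)) (LinearMap.mem_range_self _ _)
      have h2 : inner ℂ (T' x) (T' x) = (0 : ℂ) := by
        rw [hT', ContinuousLinearMap.adjoint_inner_left T (T' x) x, ← inner_conj_symm, h1,
          map_zero]
      exact inner_self_eq_zero.mp h2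
    · rintro h y ⟨z, rfl⟩
      have h1 : inner ℂ (T z) x = (inner ℂ z (T' x) : ℂ) :=
        (ContinuousLinearMap.adjoint_inner_right T z x).symm
      rw [ContinuousLinearMap.coe_coe] at h ⊢
      rw [h1, h, inner_zero_right]
  have hcoker_rank : finrank ℂ (H ⧸ LinearMap.range (T : H →ₗ[ℂ] H)) = finrank ℂ (LinearMap.ker (T : H →ₗ[ℂ] H)) := by
    rw [e2.finrank_eq, horth, hfc]
  rw [fredholmIndex, hcoker_rank]
  ring
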